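/- Let p be an odd prime and f: D_{2p} → C_2 = ⟨g | g^2 = 1⟩ the homomorphism with f(a^i) = 1 and f(a^i b) = g, extended to an algebra homomorphism f': F_2 D_{2p} → F_2 C_2. Then f' maps every bicyclic unit u_{g,h} of F_2 D_{2p} to 1; consequently b does not lie in the group generated by bicyclic units. -/

import Mathlib

open MonoidAlgebra

/-- The subgroup of the unit group of `F₂ D₂ₚ` generated by the bicyclic units
`u_{g,h} = 1 + (g - 1) h ĝ`. -/
noncomputable def bicyclicGroup (p : ℕ) :
    Subgroup (MonoidAlgebra (ZMod 2) (DihedralGroup p))ˣ :=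
  Subgroup.closure {u | ∃ g h : DihedralGroup p,
    (u : MonoidAlgebra (ZMod 2) (DihedralGroup p)) =
      1 + (MonoidAlgebra.of (ZMod 2) (DihedralGroup p) g - 1) *
        MonoidAlgebra.of (ZMod 2) (DihedralGroup p) h *
        ∑ i ∈ Finset.range (orderOf g), MonoidAlgebra.of (ZMod 2) (DihedralGroup p) (g ^ i)}

theorem stmt16 (p : ℕ) (hp : p.Prime) (hodd : Odd p)
    (F' : MonoidAlgebra (ZMod 2) (DihedralGroup p) →ₐ[ZMod 2]
      MonoidAlgebra (ZMod 2) (Multiplicative (ZMod 2)))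
    (hFr : ∀ i, F' (MonoidAlgebra.of (ZMod 2) (DihedralGroup p) (DihedralGroup.r i)) = 1)
    (hFs : ∀ i, F' (MonoidAlgebra.of (ZMod 2) (DihedralGroup p) (DihedralGroup.sr i)) =
      MonoidAlgebra.of (ZMod 2) (Multiplicative (ZMod 2)) (Multiplicative.ofAdd 1)) :
    (∀ g h : DihedralGroup p,
      F' (1 + (MonoidAlgebra.of (ZMod 2) (DihedralGroup p) g - 1) *
        MonoidAlgebra.of (ZMod 2) (DihedralGroup p) h *
        ∑ i ∈ Finset.range (orderOf g),
          MonoidAlgebra.of (ZMod 2) (DihedralGroup p) (g ^ i)) = 1) ∧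
    ∀ u : (MonoidAlgebra (ZMod 2) (DihedralGroup p))ˣ,
      (u : MonoidAlgebra (ZMod 2) (DihedralGroup p)) =
        MonoidAlgebra.of (ZMod 2) (DihedralGroup p) (DihedralGroup.sr 0) →
      u ∉ bicyclicGroup p := by
  set X : MonoidAlgebra (ZMod 2) (Multiplicative (ZMod 2)) :=
    MonoidAlgebra.of (ZMod 2) (Multiplicative (ZMod 2)) (Multiplicative.ofAdd 1) with hXdef
  have hX2 : X * X = 1 := by
    rw [hXdef, ← map_mul]
    have : (Multiplicative.ofAdd (1 : ZMod 2)) * Multiplicative.ofAdd 1 = 1 := by decide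
    rw [this, map_one]
  have part1 : ∀ g h : DihedralGroup p,
      F' (1 + (MonoidAlgebra.of (ZMod 2) (DihedralGroup p) g - 1) *
        MonoidAlgebra.of (ZMod 2) (DihedralGroup p) h *
        ∑ i ∈ Finset.range (orderOf g),
          MonoidAlgebra.of (ZMod 2) (DihedralGroup p) (g ^ i)) = 1 := by
    intro g h
    rw [map_add, map_one, map_mul, map_mul, map_sub, map_one]
    cases g with
    | r j =>
      rw [hFr j]
      ring
    | sr j =>
      rw [hFs j, DihedralGroup.orderOf_sr]
      have hsum : (∑ i ∈ Finset.range 2,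
          F' (MonoidAlgebra.of (ZMod 2) (DihedralGroup p) (DihedralGroup.sr j ^ i))) = 1 + X := by
        rw [Finset.sum_range_succ, Finset.sum_range_one, pow_zero, pow_one, map_one, map_one,
          hFs j]
      rw [map_sum, hsum]
      have : (X - 1) * F' (MonoidAlgebra.of (ZMod 2) (DihedralGroup p) h) * (1 + X)
          = F' (MonoidAlgebra.of (ZMod 2) (DihedralGroup p) h) * (X * X - 1) := by ring
      rw [this, hX2]
      ring
  refine ⟨part1, ?_⟩
  intro u hu hmem
  have key : ∀ v ∈ bicyclicGroup p, F' (v : MonoidAlgebra (ZMod 2) (DihedralGroup p)) = 1 := by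
    intro v hv
    induction hv using Subgroup.closure_induction with
    | mem w hw =>
      obtain ⟨g, h, hw⟩ := hw
      rw [hw]; exact part1 g h
    | one => simp
    | mul a b _ _ ha hb => rw [Units.val_mul, map_mul, ha, hb, one_mul]
    | inv a _ ha =>
      have : F' ((a : MonoidAlgebra (ZMod 2) (DihedralGroup p))) *
          F' ((a⁻¹ : _ˣ) : MonoidAlgebra (ZMod 2) (DihedralGroup p)) = 1 := by
        rw [← map_mul, ← Units.val_mul, mul_inv_cancel, Units.val_one, map_one]
      rw [ha, one_mul] at this
      exact this
  have h1 := key u hmem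
  rw [hu, hFs 0] at h1
  have : (Multiplicative.ofAdd (1 : ZMod 2)) ≠ 1 := by decide
  exact this (by
    have := h1
    rw [MonoidAlgebra.one_def] at this
    exact (MonoidAlgebra.single_left_injective (by norm_num : (1 : ZMod 2) ≠ 0) this))
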